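/- Non-smooth case: let f be convex and L-Lipschitz, let z* be a dual optimal solution (so x* = −λ⁻¹Aᵀz*), let y* be a sketched dual optimal solution, and set x̃ = −λ⁻¹Aᵀy*. Then for any λ > 0, ‖x̃ − x*‖₂ ≤ (6L/λ)·√(σ₁ Z_f), where σ₁ is the largest singular value of A. -/

import Mathlib

open Matrix Finset Real Set

noncomputable section

namespace Sketch

/-- The ℓ2 norm of a vector in `Fin k → ℝ`. -/
def norm2 {k : ℕ} (x : Fin k → ℝ) : ℝ := Real.sqrt (∑ i, x i ^ 2)

/-- The continuous linear functional `v ↦ ⟨w, v⟩`; used to state that a function has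
gradient `w` at a point. -/
def dotCLM {k : ℕ} (w : Fin k → ℝ) : (Fin k → ℝ) →L[ℝ] ℝ :=
  LinearMap.toContinuousLinearMap
    { toFun := fun v => w ⬝ᵥ v
      map_add' := fun a b => dotProduct_add w a b
      map_smul' := fun c a => by
        simp [dotProduct, Finset.mul_sum, mul_left_comm] }

/-- The domain of the Fenchel conjugate `f*`. -/
def fenchelDom {k : ℕ} (f : (Fin k → ℝ) → ℝ) : Set (Fin k → ℝ) :=
  {z | BddAbove (Set.range fun w => w ⬝ᵥ z - f w)}

/-- The Fenchel conjugate `f*(z) = sup_w (⟨w, z⟩ - f(w))` (as a real-valued supremum,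
meaningful on `fenchelDom f`). -/
def fenchel {k : ℕ} (f : (Fin k → ℝ) → ℝ) (z : Fin k → ℝ) : ℝ :=
  ⨆ w, (w ⬝ᵥ z - f w)

/-- The subdifferential of the Fenchel conjugate `f*` at `z`. -/
def fenchelSubdiff {k : ℕ} (f : (Fin k → ℝ) → ℝ) (z : Fin k → ℝ) : Set (Fin k → ℝ) :=
  {g | ∀ y ∈ fenchelDom f, fenchel f z + g ⬝ᵥ (y - z) ≤ fenchel f y}

/-- `P` is the orthogonal projector onto the range (column space) of `S`. -/
def IsOrthProj {q m : ℕ} (S : Matrix (Fin q) (Fin m) ℝ) (P : Matrix (Fin q) (Fin q) ℝ) : Prop :=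
  Pᵀ = P ∧ P * P = P ∧ P * S = S ∧ ∃ C : Matrix (Fin m) (Fin q) ℝ, P = S * C

/-- The quantity `Z_f`: the supremum of `(Δᵀ B P⊥ Bᵀ Δ)^{1/2} / ‖Δ‖₂` over nonzero
`Δ ∈ dom f* - z*`. -/
def Zf {k q : ℕ} (f : (Fin k → ℝ) → ℝ) (B : Matrix (Fin k) (Fin q) ℝ)
    (Pperp : Matrix (Fin q) (Fin q) ℝ) (zs : Fin k → ℝ) : ℝ :=
  sSup {r | ∃ Δ : Fin k → ℝ, Δ ≠ 0 ∧ zs + Δ ∈ fenchelDom f ∧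
    r = Real.sqrt (Δ ⬝ᵥ (B * Pperp * Bᵀ).mulVec Δ) / norm2 Δ}

/-- The spectral norm (largest singular value) of a matrix. -/
def specNorm {a b : ℕ} (M : Matrix (Fin a) (Fin b) ℝ) : ℝ :=
  sSup {r | ∃ v : Fin b → ℝ, norm2 v = 1 ∧ r = norm2 (M.mulVec v)}

/-- The eigenvalues of `A * Aᵀ` (i.e. the squared singular values of `A`),
sorted in decreasing order. -/
def eigsDesc {n d : ℕ} (A : Matrix (Fin n) (Fin d) ℝ) : Fin n → ℝ := fun i =>
  ((Matrix.isHermitian_mul_conjTranspose_self A).eigenvalues ∘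
    Tuple.sort (Matrix.isHermitian_mul_conjTranspose_self A).eigenvalues) i.rev

/-- The spectral tail `R_k(A) = (σ_k² + (1/k) ∑_{j=k+1}^ρ σ_j²)^{1/2}`. -/
def Rk {n d : ℕ} (A : Matrix (Fin n) (Fin d) ℝ) (k : ℕ) : ℝ :=
  Real.sqrt ((∑ j : Fin n, if (j : ℕ) + 1 = k then eigsDesc A j else 0)
    + (1 / (k : ℝ)) * ∑ j : Fin n, if k ≤ (j : ℕ) then eigsDesc A j else 0)

/-- Product measure on `n × m` matrices with i.i.d. standard Gaussian entries. -/
def gaussMatrix (n m : ℕ) : MeasureTheory.Measure (Fin n → Fin m → ℝ) :=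
  MeasureTheory.Measure.pi fun _ => MeasureTheory.Measure.pi fun _ =>
    ProbabilityTheory.gaussianReal 0 1


/-- The largest eigenvalue (Rayleigh quotient supremum) of a symmetric matrix. -/
def eigMax {q : ℕ} (M : Matrix (Fin q) (Fin q) ℝ) : ℝ :=
  sSup {r | ∃ v : Fin q → ℝ, norm2 v = 1 ∧ r = v ⬝ᵥ M.mulVec v}

/-- The smallest eigenvalue (Rayleigh quotient infimum) of a symmetric matrix. -/
def eigMin {q : ℕ} (M : Matrix (Fin q) (Fin q) ℝ) : ℝ :=
  sInf {r | ∃ v : Fin q → ℝ, norm2 v = 1 ∧ r = v ⬝ᵥ M.mulVec v}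


lemma dot_self_nonneg {k : ℕ} (x : Fin k → ℝ) : 0 ≤ x ⬝ᵥ x :=
  Finset.sum_nonneg fun _ _ => mul_self_nonneg _

lemma n2_nonneg {k : ℕ} (x : Fin k → ℝ) : 0 ≤ norm2 x := Real.sqrt_nonneg _

lemma n2_eq {k : ℕ} (x : Fin k → ℝ) : norm2 x = Real.sqrt (x ⬝ᵥ x) := by
  simp [norm2, dotProduct, sq]

lemma n2_sq {k : ℕ} (x : Fin k → ℝ) : norm2 x ^ 2 = x ⬝ᵥ x := by
  rw [n2_eq, Real.sq_sqrt (dot_self_nonneg x)]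

lemma n2_mono {k : ℕ} {x y : Fin k → ℝ} (h : x ⬝ᵥ x ≤ y ⬝ᵥ y) : norm2 x ≤ norm2 y := by
  rw [n2_eq, n2_eq]; exact Real.sqrt_le_sqrt h

lemma dot_le_n2 {k : ℕ} (x y : Fin k → ℝ) : x ⬝ᵥ y ≤ norm2 x * norm2 y := by
  have h := Finset.sum_mul_sq_le_sq_mul_sq Finset.univ x y
  have h2 : x ⬝ᵥ y ≤ Real.sqrt ((x ⬝ᵥ x) * (y ⬝ᵥ y)) := by
    have h3 := Real.sqrt_le_sqrt (by simpa [dotProduct, sq] using h :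
      (x ⬝ᵥ y)^2 ≤ (x ⬝ᵥ x) * (y ⬝ᵥ y))
    calc x ⬝ᵥ y ≤ |x ⬝ᵥ y| := le_abs_self _
    _ = Real.sqrt ((x ⬝ᵥ y)^2) := (Real.sqrt_sq_eq_abs _).symm
    _ ≤ _ := h3
  rwa [Real.sqrt_mul (dot_self_nonneg x), ← n2_eq, ← n2_eq] at h2

lemma n2_smul {k : ℕ} (c : ℝ) (x : Fin k → ℝ) : norm2 (c • x) = |c| * norm2 x := by
  simp only [norm2, Pi.smul_apply, smul_eq_mul, mul_pow]
  rw [← Finset.mul_sum, Real.sqrt_mul (sq_nonneg c), Real.sqrt_sq_eq_abs]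

lemma n2_zero {k : ℕ} : norm2 (0 : Fin k → ℝ) = 0 := by simp [norm2]

lemma n2_eq_zero {k : ℕ} {x : Fin k → ℝ} (h : norm2 x = 0) : x = 0 := by
  have h2 : (∑ i, x i ^ 2) = 0 := by
    have h1 : (∑ i, x i ^ 2) ≤ 0 := Real.sqrt_eq_zero'.mp h
    exact le_antisymm h1 (Finset.sum_nonneg fun i _ => sq_nonneg _)
  funext i
  have := (Finset.sum_eq_zero_iff_of_nonneg (fun i _ => sq_nonneg (x i))).mp h2 i (Finset.mem_univ i)
  exact pow_eq_zero_iff (by norm_num) |>.mp this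

lemma n2_pos {k : ℕ} {x : Fin k → ℝ} (h : x ≠ 0) : 0 < norm2 x :=
  lt_of_le_of_ne (n2_nonneg x) fun h' => h (n2_eq_zero h'.symm)

/-- Frobenius-type bound. -/
lemma frob_bound {a b : ℕ} (M : Matrix (Fin a) (Fin b) ℝ) (v : Fin b → ℝ) :
    norm2 (M.mulVec v) ≤ Real.sqrt (∑ i, ∑ j, M i j ^ 2) * norm2 v := by
  have key : (M.mulVec v) ⬝ᵥ (M.mulVec v) ≤ (∑ i, ∑ j, M i j ^ 2) * (v ⬝ᵥ v) := by
    have hrow : ∀ i : Fin a, (M.mulVec v i) * (M.mulVec v i) ≤ (∑ j, M i j ^ 2) * (v ⬝ᵥ v) := by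
      intro i
      have := Finset.sum_mul_sq_le_sq_mul_sq Finset.univ (M i) v
      simpa [Matrix.mulVec, dotProduct, sq] using this
    calc (M.mulVec v) ⬝ᵥ (M.mulVec v) = ∑ i, (M.mulVec v i) * (M.mulVec v i) := rfl
    _ ≤ ∑ i, (∑ j, M i j ^ 2) * (v ⬝ᵥ v) := Finset.sum_le_sum fun i _ => hrow i
    _ = (∑ i, ∑ j, M i j ^ 2) * (v ⬝ᵥ v) := by rw [Finset.sum_mul]
  have hS : 0 ≤ ∑ i, ∑ j, M i j ^ 2 :=
    Finset.sum_nonneg fun _ _ => Finset.sum_nonneg fun _ _ => sq_nonneg _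
  rw [n2_eq, n2_eq, ← Real.sqrt_mul hS]
  exact Real.sqrt_le_sqrt key

lemma spec_bddAbove {a b : ℕ} (M : Matrix (Fin a) (Fin b) ℝ) :
    BddAbove {r | ∃ v : Fin b → ℝ, norm2 v = 1 ∧ r = norm2 (M.mulVec v)} := by
  refine ⟨Real.sqrt (∑ i, ∑ j, M i j ^ 2), ?_⟩
  rintro r ⟨v, hv, rfl⟩
  have := frob_bound M v
  rwa [hv, mul_one] at this

lemma specNorm_nonneg {a b : ℕ} (M : Matrix (Fin a) (Fin b) ℝ) : 0 ≤ specNorm M :=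
  Real.sSup_nonneg fun r hr => by obtain ⟨v, hv, rfl⟩ := hr; exact n2_nonneg _

lemma mulVec_le_spec {a b : ℕ} (M : Matrix (Fin a) (Fin b) ℝ) (v : Fin b → ℝ) :
    norm2 (M.mulVec v) ≤ specNorm M * norm2 v := by
  by_cases hv : v = 0
  · simp [hv, Matrix.mulVec_zero, n2_zero]
  · have hc : 0 < norm2 v := n2_pos hv
    have hunit : norm2 ((norm2 v)⁻¹ • v) = 1 := by
      rw [n2_smul, abs_of_nonneg (inv_nonneg.mpr hc.le), inv_mul_cancel₀ hc.ne']
    have hmem : norm2 (M.mulVec ((norm2 v)⁻¹ • v))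
        ∈ {r | ∃ v : Fin b → ℝ, norm2 v = 1 ∧ r = norm2 (M.mulVec v)} :=
      ⟨_, hunit, rfl⟩
    have hle := le_csSup (spec_bddAbove M) hmem
    rw [Matrix.mulVec_smul, n2_smul, abs_of_nonneg (inv_nonneg.mpr hc.le)] at hle
    calc norm2 (M.mulVec v) = ((norm2 v)⁻¹ * norm2 (M.mulVec v)) * norm2 v := by
          field_simp
    _ ≤ specNorm M * norm2 v := mul_le_mul_of_nonneg_right hle hc.le

lemma transpose_mulVec_le_spec {a b : ℕ} (M : Matrix (Fin a) (Fin b) ℝ) (z : Fin a → ℝ) :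
    norm2 (Mᵀ.mulVec z) ≤ specNorm M * norm2 z := by
  set w := Mᵀ.mulVec z with hw
  have hdot : w ⬝ᵥ w = z ⬝ᵥ (M.mulVec w) := by
    rw [Matrix.dotProduct_mulVec z M w, ← Matrix.mulVec_transpose]
  have h2 : w ⬝ᵥ w ≤ (specNorm M * norm2 z) * norm2 w := by
    calc w ⬝ᵥ w = z ⬝ᵥ (M.mulVec w) := hdot
    _ ≤ norm2 z * norm2 (M.mulVec w) := dot_le_n2 _ _
    _ ≤ norm2 z * (specNorm M * norm2 w) :=
        mul_le_mul_of_nonneg_left (mulVec_le_spec M w) (n2_nonneg z)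
    _ = (specNorm M * norm2 z) * norm2 w := by ring
  rcases eq_or_lt_of_le (n2_nonneg w) with h0 | h0
  · rw [← h0]
    exact mul_nonneg (specNorm_nonneg M) (n2_nonneg z)
  · have : norm2 w * norm2 w ≤ (specNorm M * norm2 z) * norm2 w := by
      rw [← sq]; rw [n2_sq]; exact h2
    exact le_of_mul_le_mul_right this h0

/-- Projector dot identity. -/
lemma proj_dot {q : ℕ} {Q : Matrix (Fin q) (Fin q) ℝ} (hQt : Qᵀ = Q) (hQQ : Q * Q = Q)
    (v w : Fin q → ℝ) : (Q.mulVec v) ⬝ᵥ (Q.mulVec w) = (Q.mulVec v) ⬝ᵥ w := by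
  rw [dotProduct_mulVec, ← mulVec_transpose, hQt, mulVec_mulVec, hQQ]

lemma proj_pyth {q : ℕ} {P : Matrix (Fin q) (Fin q) ℝ} (hPt : Pᵀ = P) (hPP : P * P = P)
    (v : Fin q → ℝ) :
    ((1 - P).mulVec v) ⬝ᵥ ((1 - P).mulVec v) = v ⬝ᵥ v - (P.mulVec v) ⬝ᵥ (P.mulVec v) := by
  have hQt : (1 - P)ᵀ = 1 - P := by rw [transpose_sub, transpose_one, hPt]
  have hQQ : (1 - P) * (1 - P) = 1 - P := by
    rw [sub_mul, one_mul, mul_sub, mul_one, hPP]; abel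
  rw [proj_dot hQt hQQ, proj_dot hPt hPP, sub_mulVec, one_mulVec, sub_dotProduct,
    dotProduct_comm (P.mulVec v) v]

lemma proj_contract {q : ℕ} {P : Matrix (Fin q) (Fin q) ℝ} (hPt : Pᵀ = P) (hPP : P * P = P)
    (v : Fin q → ℝ) : norm2 ((1 - P).mulVec v) ≤ norm2 v := by
  apply n2_mono
  rw [proj_pyth hPt hPP]
  linarith [dot_self_nonneg (P.mulVec v)]

/-- quadratic form identity for A Q Aᵀ. -/
lemma quad_id {n d : ℕ} (A : Matrix (Fin n) (Fin d) ℝ) {Q : Matrix (Fin d) (Fin d) ℝ}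
    (hQt : Qᵀ = Q) (hQQ : Q * Q = Q) (Δ : Fin n → ℝ) :
    Δ ⬝ᵥ ((A * Q * Aᵀ).mulVec Δ) = (Q.mulVec (Aᵀ.mulVec Δ)) ⬝ᵥ (Q.mulVec (Aᵀ.mulVec Δ)) := by
  rw [← mulVec_mulVec, ← mulVec_mulVec, dotProduct_mulVec, ← mulVec_transpose,
    dotProduct_comm, proj_dot hQt hQQ, dotProduct_comm]

/-- midpoint square identity -/
lemma mid_sq {k : ℕ} (x y : Fin k → ℝ) :
    ((1/2:ℝ) • (x + y)) ⬝ᵥ ((1/2:ℝ) • (x + y))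
      = ((x ⬝ᵥ x) + (y ⬝ᵥ y))/2 - ((y - x) ⬝ᵥ (y - x))/4 := by
  have hpt : ∀ i : Fin k, ((1/2:ℝ) * (x i + y i)) * ((1/2:ℝ) * (x i + y i))
      = (x i * x i + y i * y i)/2 - ((y i - x i) * (y i - x i))/4 := by intro i; ring
  calc ((1/2:ℝ) • (x + y)) ⬝ᵥ ((1/2:ℝ) • (x + y))
      = ∑ i, ((x i * x i + y i * y i)/2 - ((y i - x i) * (y i - x i))/4) := by
        simp only [dotProduct, Pi.smul_apply, Pi.add_apply, smul_eq_mul]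
        exact Finset.sum_congr rfl fun i _ => hpt i
  _ = _ := by
        rw [Finset.sum_sub_distrib, ← Finset.sum_div, ← Finset.sum_div,
          Finset.sum_add_distrib]
        rfl

/-- elements of the dual domain have norm at most L -/
lemma dom_norm_le {k : ℕ} {f : (Fin k → ℝ) → ℝ} {L : ℝ} (hL : 0 ≤ L)
    (hlip : ∀ w v, |f w - f v| ≤ L * norm2 (w - v)) {z : Fin k → ℝ}
    (hz : z ∈ fenchelDom f) : norm2 z ≤ L := by
  obtain ⟨M, hM⟩ := hz
  by_contra hcon
  push_neg at hcon
  have hδ : 0 < norm2 z ^ 2 - L * norm2 z := by nlinarith [n2_nonneg z]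
  set δ : ℝ := norm2 z ^ 2 - L * norm2 z with hδdef
  set t : ℝ := max 0 ((M + f 0 + 1)/δ) with htdef
  have ht0 : 0 ≤ t := le_max_left _ _
  have htd : M + f 0 + 1 ≤ t * δ := (div_le_iff₀ hδ).mp (le_max_right _ _)
  have hr : (t • z) ⬝ᵥ z - f (t • z) ≤ M := hM (Set.mem_range_self _)
  have hdot : (t • z) ⬝ᵥ z = t * (z ⬝ᵥ z) := by
    rw [smul_dotProduct]; rfl
  have hf : f (t • z) - f 0 ≤ L * (t * norm2 z) := by
    have h1 := hlip (t • z) 0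
    have h2 : norm2 (t • z - 0) = t * norm2 z := by
      rw [sub_zero, n2_smul, abs_of_nonneg ht0]
    calc f (t • z) - f 0 ≤ |f (t • z) - f 0| := le_abs_self _
    _ ≤ L * norm2 (t • z - 0) := h1
    _ = L * (t * norm2 z) := by rw [h2]
  have htδ : t * δ = t * (z ⬝ᵥ z) - L * (t * norm2 z) := by
    rw [hδdef, ← n2_sq z]; ring
  linarith [hr, hf, htd, htδ, hdot]


lemma fenchel_mid {k : ℕ} (f : (Fin k → ℝ) → ℝ) {z y : Fin k → ℝ}
    (hz : z ∈ fenchelDom f) (hy : y ∈ fenchelDom f) :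
    (1/2:ℝ) • (z + y) ∈ fenchelDom f ∧
      fenchel f ((1/2:ℝ) • (z + y)) ≤ (fenchel f z + fenchel f y)/2 := by
  have hub : ∀ w : Fin k → ℝ,
      w ⬝ᵥ ((1/2:ℝ) • (z + y)) - f w ≤ (fenchel f z + fenchel f y)/2 := by
    intro w
    have h1 : w ⬝ᵥ z - f w ≤ fenchel f z :=
      le_ciSup (f := fun w => w ⬝ᵥ z - f w) hz w
    have h2 : w ⬝ᵥ y - f w ≤ fenchel f y :=
      le_ciSup (f := fun w => w ⬝ᵥ y - f w) hy w
    have h3 : w ⬝ᵥ ((1/2:ℝ) • (z + y)) = (w ⬝ᵥ z + w ⬝ᵥ y)/2 := by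
      rw [dotProduct_smul, dotProduct_add, smul_eq_mul]; ring
    rw [h3]; linarith
  constructor
  · exact ⟨(fenchel f z + fenchel f y)/2, by rintro r ⟨w, rfl⟩; exact hub w⟩
  · exact ciSup_le hub

lemma n2_neg {k : ℕ} (x : Fin k → ℝ) : norm2 (-x) = norm2 x := by
  have h := n2_smul (-1) x
  simpa using h

lemma Zf_bdd {n d m0 : ℕ} (f : (Fin n → ℝ) → ℝ) (A : Matrix (Fin n) (Fin d) ℝ)
    (S : Matrix (Fin d) (Fin m0) ℝ) {P : Matrix (Fin d) (Fin d) ℝ} (hP : IsOrthProj S P)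
    (zs : Fin n → ℝ) :
    BddAbove {r | ∃ Δ : Fin n → ℝ, Δ ≠ 0 ∧ zs + Δ ∈ fenchelDom f ∧
      r = Real.sqrt (Δ ⬝ᵥ (A * (1 - P) * Aᵀ).mulVec Δ) / norm2 Δ} := by
  obtain ⟨hPt, hPP, -, -⟩ := hP
  have hQt : (1 - P)ᵀ = 1 - P := by rw [transpose_sub, transpose_one, hPt]
  have hQQ : (1 - P) * (1 - P) = 1 - P := by
    rw [sub_mul, one_mul, mul_sub, mul_one, hPP]; abel
  refine ⟨Real.sqrt (∑ i, ∑ j, Aᵀ i j ^ 2), ?_⟩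
  rintro r ⟨Δ, hΔ0, -, rfl⟩
  rw [quad_id A hQt hQQ, ← n2_eq, div_le_iff₀ (n2_pos hΔ0)]
  calc norm2 ((1 - P).mulVec (Aᵀ.mulVec Δ)) ≤ norm2 (Aᵀ.mulVec Δ) :=
      proj_contract hPt hPP _
  _ ≤ _ := frob_bound Aᵀ Δ

lemma Zf_nonneg {n d : ℕ} (f : (Fin n → ℝ) → ℝ) (A : Matrix (Fin n) (Fin d) ℝ)
    (Pperp : Matrix (Fin d) (Fin d) ℝ) (zs : Fin n → ℝ) : 0 ≤ Zf f A Pperp zs :=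
  Real.sSup_nonneg fun r hr => by
    obtain ⟨Δ, -, -, rfl⟩ := hr
    exact div_nonneg (Real.sqrt_nonneg _) (n2_nonneg _)

lemma le_Zf {n d m0 : ℕ} (f : (Fin n → ℝ) → ℝ) (A : Matrix (Fin n) (Fin d) ℝ)
    (S : Matrix (Fin d) (Fin m0) ℝ) {P : Matrix (Fin d) (Fin d) ℝ} (hP : IsOrthProj S P)
    (zs : Fin n → ℝ) {Δ : Fin n → ℝ} (hΔ0 : Δ ≠ 0) (hdom : zs + Δ ∈ fenchelDom f) :
    norm2 ((1 - P).mulVec (Aᵀ.mulVec Δ)) / norm2 Δ ≤ Zf f A (1 - P) zs := by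
  obtain ⟨hPt, hPP, -, -⟩ := id hP
  have hQt : (1 - P)ᵀ = 1 - P := by rw [transpose_sub, transpose_one, hPt]
  have hQQ : (1 - P) * (1 - P) = 1 - P := by
    rw [sub_mul, one_mul, mul_sub, mul_one, hPP]; abel
  apply le_csSup (Zf_bdd f A S hP zs)
  exact ⟨Δ, hΔ0, hdom, by rw [quad_id A hQt hQQ, ← n2_eq]⟩


/-- non-smooth case: for `f` convex and `L`-Lipschitz, with `zs` a dual
optimal solution (so `x* = -λ⁻¹ Aᵀ zs`), `ys` a sketched dual optimal solution, and
`x̃ = -λ⁻¹ Aᵀ ys`, one has `‖x̃ - x*‖₂ ≤ (6L/λ) √(σ₁ Z_f)`. -/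
theorem statement_12 {n d m : ℕ} (f : (Fin n → ℝ) → ℝ) (L lam : ℝ)
    (A : Matrix (Fin n) (Fin d) ℝ)
    (S : Matrix (Fin d) (Fin m) ℝ) (P : Matrix (Fin d) (Fin d) ℝ)
    (hP : IsOrthProj S P)
    (hL : 0 ≤ L) (hlam : 0 < lam)
    (hconv : ConvexOn ℝ Set.univ f)
    (hlip : ∀ w v, |f w - f v| ≤ L * norm2 (w - v))
    (zs : Fin n → ℝ) (hzsdom : zs ∈ fenchelDom f)
    (hzs : ∀ z ∈ fenchelDom f,
      fenchel f zs + 1 / (2 * lam) * norm2 (Aᵀ.mulVec zs) ^ 2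
        ≤ fenchel f z + 1 / (2 * lam) * norm2 (Aᵀ.mulVec z) ^ 2)
    (ys : Fin n → ℝ) (hysdom : ys ∈ fenchelDom f)
    (hys : ∀ y ∈ fenchelDom f,
      fenchel f ys + 1 / (2 * lam) * norm2 ((P * Aᵀ).mulVec ys) ^ 2
        ≤ fenchel f y + 1 / (2 * lam) * norm2 ((P * Aᵀ).mulVec y) ^ 2) :
    norm2 (-(lam⁻¹ • Aᵀ.mulVec ys) - -(lam⁻¹ • Aᵀ.mulVec zs))
      ≤ 6 * L / lam * Real.sqrt (specNorm A * Zf f A (1 - P) zs) := by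
  classical
  obtain ⟨hPt, hPP, -, -⟩ := id hP
  have hQt : (1 - P)ᵀ = 1 - P := by rw [transpose_sub, transpose_one, hPt]
  have hQQ : (1 - P) * (1 - P) = 1 - P := by
    rw [sub_mul, one_mul, mul_sub, mul_one, hPP]; abel
  set σ := specNorm A with hσdef
  set Z := Zf f A (1 - P) zs with hZdef
  set a := Aᵀ.mulVec zs with ha
  set b := Aᵀ.mulVec ys with hb
  clear_value σ Z a b
  have hLHS : -(lam⁻¹ • b) - -(lam⁻¹ • a) = (-lam⁻¹) • (b - a) := by
    funext i; simp [smul_sub]; ring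
  rw [hLHS, n2_smul, abs_neg, abs_of_nonneg (inv_nonneg.mpr hlam.le)]
  have hrhs : 6 * L / lam * Real.sqrt (σ * Z) = lam⁻¹ * (6 * L * Real.sqrt (σ * Z)) := by
    field_simp
  rw [hrhs]
  apply mul_le_mul_of_nonneg_left _ (inv_nonneg.mpr hlam.le)
  -- main goal : norm2 (b - a) ≤ 6 * L * Real.sqrt (σ * Z)
  by_cases hu0 : b - a = 0
  · rw [hu0, n2_zero]
    exact mul_nonneg (by linarith) (Real.sqrt_nonneg _)
  set Δ : Fin n → ℝ := ys - zs with hΔset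
  clear_value Δ
  have hΔdef : b - a = Aᵀ.mulVec Δ := by
    rw [hΔset, Matrix.mulVec_sub, ha, hb]
  have hΔ0 : Δ ≠ 0 := by
    intro h; apply hu0; rw [hΔdef, h, Matrix.mulVec_zero]
  have hzL : norm2 zs ≤ L := dom_norm_le hL hlip hzsdom
  have hyL : norm2 ys ≤ L := dom_norm_le hL hlip hysdom
  have hLpos : 0 < L := by
    rcases eq_or_lt_of_le hL with h0 | h0
    · exfalso; apply hΔ0
      rw [← h0] at hzL hyL
      have h1 : zs = 0 := n2_eq_zero (le_antisymm hzL (n2_nonneg zs))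
      have h2 : ys = 0 := n2_eq_zero (le_antisymm hyL (n2_nonneg ys))
      rw [hΔset, h1, h2, sub_zero]
    · exact h0
  -- Z_f bounds
  have hysdom' : zs + Δ ∈ fenchelDom f := by
    have : zs + Δ = ys := by rw [hΔset]; abel
    rw [this]; exact hysdom
  have hZge : norm2 ((1 - P).mulVec (b - a)) / norm2 Δ ≤ Z := by
    rw [hΔdef, hZdef]; exact le_Zf f A S hP zs hΔ0 hysdom'
  have hZ0 : 0 ≤ Z := by rw [hZdef]; exact Zf_nonneg f A (1 - P) zs
  have hpu : norm2 ((1 - P).mulVec (b - a)) ≤ Z * norm2 Δ := by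
    rw [div_le_iff₀ (n2_pos hΔ0)] at hZge
    linarith [hZge]
  -- ‖Δ‖ ≤ 2L
  have hΔL : norm2 Δ ≤ 2 * L := by
    have h1 : ys ⬝ᵥ ys ≤ L ^ 2 := by
      rw [← n2_sq]; nlinarith [hyL, n2_nonneg ys]
    have h2 : zs ⬝ᵥ zs ≤ L ^ 2 := by
      rw [← n2_sq]; nlinarith [hzL, n2_nonneg zs]
    have h3 : -(ys ⬝ᵥ zs) ≤ L ^ 2 := by
      have hcs := dot_le_n2 (-ys) zs
      rw [neg_dotProduct, n2_neg] at hcs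
      nlinarith [n2_nonneg ys, n2_nonneg zs, hyL, hzL]
    have hexp : Δ ⬝ᵥ Δ = ys ⬝ᵥ ys - 2 * (ys ⬝ᵥ zs) + zs ⬝ᵥ zs := by
      rw [hΔset, sub_dotProduct, dotProduct_sub, dotProduct_sub, dotProduct_comm zs ys]
      ring
    have hdd : Δ ⬝ᵥ Δ ≤ (2 * L) ^ 2 := by nlinarith [h1, h2, h3, hexp]
    rw [n2_eq]
    calc Real.sqrt (Δ ⬝ᵥ Δ) ≤ Real.sqrt ((2 * L) ^ 2) := Real.sqrt_le_sqrt hdd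
    _ = 2 * L := Real.sqrt_sq (by linarith)
  -- spectral bounds
  have hσ0 : 0 ≤ σ := by rw [hσdef]; exact specNorm_nonneg A
  have hta : norm2 a ≤ σ * norm2 zs := by
    rw [ha, hσdef]; exact transpose_mulVec_le_spec A zs
  have htb : norm2 b ≤ σ * norm2 ys := by
    rw [hb, hσdef]; exact transpose_mulVec_le_spec A ys
  have hpa : norm2 ((1 - P).mulVec a) ≤ σ * L := by
    calc norm2 ((1 - P).mulVec a) ≤ norm2 a := proj_contract hPt hPP a
    _ ≤ σ * norm2 zs := hta
    _ ≤ σ * L := mul_le_mul_of_nonneg_left hzL hσ0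
  have hpb : norm2 ((1 - P).mulVec b) ≤ σ * L := by
    calc norm2 ((1 - P).mulVec b) ≤ norm2 b := proj_contract hPt hPP b
    _ ≤ σ * norm2 ys := htb
    _ ≤ σ * L := mul_le_mul_of_nonneg_left hyL hσ0
  -- optimality at midpoint
  obtain ⟨hmdom, hfm⟩ := fenchel_mid f hzsdom hysdom
  have hG1 := hzs _ hmdom
  have hG2 := hys _ hmdom
  have hAm : Aᵀ.mulVec ((1/2 : ℝ) • (zs + ys)) = (1/2 : ℝ) • (a + b) := by
    rw [Matrix.mulVec_smul, Matrix.mulVec_add, ha, hb]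
  have hPAm : (P * Aᵀ).mulVec ((1/2 : ℝ) • (zs + ys))
      = (1/2 : ℝ) • (P.mulVec a + P.mulVec b) := by
    rw [Matrix.mulVec_smul, Matrix.mulVec_add, ← Matrix.mulVec_mulVec, ← Matrix.mulVec_mulVec,
      ha, hb]
  have e1 : norm2 (Aᵀ.mulVec ((1/2 : ℝ) • (zs + ys))) ^ 2
      = ((a ⬝ᵥ a) + (b ⬝ᵥ b)) / 2 - ((b - a) ⬝ᵥ (b - a)) / 4 := by
    rw [hAm, n2_sq, mid_sq]
  have e2 : norm2 ((P * Aᵀ).mulVec ((1/2 : ℝ) • (zs + ys))) ^ 2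
      = ((P.mulVec a ⬝ᵥ P.mulVec a) + (P.mulVec b ⬝ᵥ P.mulVec b)) / 2
        - ((P.mulVec b - P.mulVec a) ⬝ᵥ (P.mulVec b - P.mulVec a)) / 4 := by
    rw [hPAm, n2_sq, mid_sq]
  have e4 : norm2 ((P * Aᵀ).mulVec ys) ^ 2 = P.mulVec b ⬝ᵥ P.mulVec b := by
    rw [← Matrix.mulVec_mulVec, ← hb, n2_sq]
  rw [e1, n2_sq] at hG1
  rw [e2, e4] at hG2
  -- Pythagoras
  have pythA : ((1 - P).mulVec a) ⬝ᵥ ((1 - P).mulVec a)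
      = a ⬝ᵥ a - (P.mulVec a) ⬝ᵥ (P.mulVec a) := proj_pyth hPt hPP a
  have pythB : ((1 - P).mulVec b) ⬝ᵥ ((1 - P).mulVec b)
      = b ⬝ᵥ b - (P.mulVec b) ⬝ᵥ (P.mulVec b) := proj_pyth hPt hPP b
  have hc : (0:ℝ) < 1 / (2 * lam) := by positivity
  have key0 : (b - a) ⬝ᵥ (b - a)
      ≤ 2 * ((b ⬝ᵥ b - (P.mulVec b) ⬝ᵥ (P.mulVec b))
          - (a ⬝ᵥ a - (P.mulVec a) ⬝ᵥ (P.mulVec a))) := by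
    have hmul : 1 / (2 * lam) * ((b - a) ⬝ᵥ (b - a))
        ≤ 1 / (2 * lam) * (2 * ((b ⬝ᵥ b - (P.mulVec b) ⬝ᵥ (P.mulVec b))
            - (a ⬝ᵥ a - (P.mulVec a) ⬝ᵥ (P.mulVec a)))) := by
      have hw := mul_nonneg hc.le (dot_self_nonneg (P.mulVec b - P.mulVec a))
      linarith [hG1, hG2, hfm, hw]
    exact le_of_mul_le_mul_left hmul hc
  rw [← pythA, ← pythB] at key0
  -- gap bound
  have hqu : (1 - P).mulVec (b - a) = (1 - P).mulVec b - (1 - P).mulVec a :=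
    Matrix.mulVec_sub _ _ _
  have hgap : ((1 - P).mulVec b) ⬝ᵥ ((1 - P).mulVec b)
      - ((1 - P).mulVec a) ⬝ᵥ ((1 - P).mulVec a)
      ≤ norm2 ((1 - P).mulVec (b - a))
        * (norm2 ((1 - P).mulVec a) + norm2 ((1 - P).mulVec b)) := by
    have hsplit : ((1 - P).mulVec b) ⬝ᵥ ((1 - P).mulVec b)
        - ((1 - P).mulVec a) ⬝ᵥ ((1 - P).mulVec a)
        = ((1 - P).mulVec (b - a)) ⬝ᵥ ((1 - P).mulVec b)
          + ((1 - P).mulVec (b - a)) ⬝ᵥ ((1 - P).mulVec a) := by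
      rw [hqu, sub_dotProduct, sub_dotProduct,
        dotProduct_comm ((1 - P).mulVec a) ((1 - P).mulVec b)]
      ring
    rw [hsplit]
    have hb1 := dot_le_n2 ((1 - P).mulVec (b - a)) ((1 - P).mulVec b)
    have hb2 := dot_le_n2 ((1 - P).mulVec (b - a)) ((1 - P).mulVec a)
    calc ((1 - P).mulVec (b - a)) ⬝ᵥ ((1 - P).mulVec b)
        + ((1 - P).mulVec (b - a)) ⬝ᵥ ((1 - P).mulVec a)
        ≤ norm2 ((1 - P).mulVec (b - a)) * norm2 ((1 - P).mulVec b)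
          + norm2 ((1 - P).mulVec (b - a)) * norm2 ((1 - P).mulVec a) := add_le_add hb1 hb2
    _ = norm2 ((1 - P).mulVec (b - a))
        * (norm2 ((1 - P).mulVec a) + norm2 ((1 - P).mulVec b)) := by ring
  -- combine
  have hpu2 : norm2 ((1 - P).mulVec (b - a)) ≤ Z * (2 * L) :=
    le_trans hpu (mul_le_mul_of_nonneg_left hΔL hZ0)
  have hmain : (b - a) ⬝ᵥ (b - a) ≤ 8 * L ^ 2 * (σ * Z) := by
    have hsum : norm2 ((1 - P).mulVec a) + norm2 ((1 - P).mulVec b) ≤ 2 * (σ * L) := by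
      linarith [hpa, hpb]
    have hstep : norm2 ((1 - P).mulVec (b - a))
        * (norm2 ((1 - P).mulVec a) + norm2 ((1 - P).mulVec b))
        ≤ (Z * (2 * L)) * (2 * (σ * L)) := by
      apply mul_le_mul hpu2 hsum
      · exact add_nonneg (n2_nonneg _) (n2_nonneg _)
      · exact mul_nonneg hZ0 (by linarith)
    linarith [key0, hgap, hstep]
  -- finish
  have hσZ : 0 ≤ σ * Z := mul_nonneg hσ0 hZ0
  have hsq : Real.sqrt (σ * Z) ^ 2 = σ * Z := Real.sq_sqrt hσZ
  have h36 : norm2 (b - a) ^ 2 ≤ (6 * L * Real.sqrt (σ * Z)) ^ 2 := by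
    rw [n2_sq]
    have hexp : (6 * L * Real.sqrt (σ * Z)) ^ 2 = 36 * L ^ 2 * (σ * Z) := by
      rw [mul_pow, hsq]; ring
    rw [hexp]
    linarith [hmain, mul_nonneg (sq_nonneg L) hσZ]
  calc norm2 (b - a) = Real.sqrt (norm2 (b - a) ^ 2) := (Real.sqrt_sq (n2_nonneg _)).symm
  _ ≤ Real.sqrt ((6 * L * Real.sqrt (σ * Z)) ^ 2) := Real.sqrt_le_sqrt h36
  _ = 6 * L * Real.sqrt (σ * Z) :=
      Real.sqrt_sq (mul_nonneg (by linarith) (Real.sqrt_nonneg _))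


end Sketch
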